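/- Let K be an integral domain of prime characteristic c. A function f : ℤ≥0 → K is a K-linear combination of basic sum-functions if and only if f is periodic with period a power of c. -/

import Mathlib

open Finset Matrix

/-- Periodicity of the basic sum-function `ρ_i` in characteristic `c`. -/
lemma rho_periodic (K : Type*) [CommRing K] (c : ℕ) (hc : c.Prime) [CharP K c]
    (r i k : ℕ) (hi : i < c ^ r) :
    (((i + (k + c ^ r)).choose i : ℕ) : K) = (((i + k).choose i : ℕ) : K) := by
  have h1 : i + (k + c ^ r) = c ^ r + (i + k) := by ring
  rw [h1, Nat.add_choose_eq]
  rw [Nat.cast_sum]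
  rw [Finset.sum_eq_single (0, i)]
  · simp
  · rintro ⟨a, b⟩ hab hne
    replace hab : a + b = i := by simpa using hab
    have ha : a ≠ 0 := by
      rintro rfl
      simp at hab
      exact hne (by simp [hab])
    have hac : a ≠ c ^ r := by
      rintro rfl
      omega
    have : c ∣ (c ^ r).choose a := Nat.Prime.dvd_choose_pow hc ha hac
    obtain ⟨t, ht⟩ := this
    simp only [ht]
    push_cast
    rw [CharP.cast_eq_zero K c]
    ring
  · intro h
    exact absurd (by simp [Finset.mem_antidiagonal]) h

/-- Interpolation: any `N` values can be matched by a combination of `ρ_0, …, ρ_{N-1}`. -/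
lemma interp (K : Type*) [CommRing K] [IsDomain K] (N : ℕ) (g : ℕ → K) :
    ∃ a : Fin N → K, ∀ k < N, g k = ∑ i : Fin N, a i * (((i : ℕ) + k).choose (i : ℕ) : K) := by
  classical
  set L : Matrix (Fin N) (Fin N) K := fun i j => ((i : ℕ).choose (j : ℕ) : K) with hL
  set U : Matrix (Fin N) (Fin N) K :=
    fun j k => if (j : ℕ) ≤ (k : ℕ) then (((k : ℕ).choose ((k : ℕ) - (j : ℕ))) : K) else 0 with hU
  set M : Matrix (Fin N) (Fin N) K := fun i k => ((((i : ℕ) + (k : ℕ)).choose (i : ℕ)) : K)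
    with hM
  have hMLU : M = L * U := by
    ext i k
    rw [hM]
    rw [Matrix.mul_apply]
    simp only [Matrix.mul_apply, hL, hU]
    rw [Nat.choose_symm_add, Nat.add_choose_eq, Nat.cast_sum,
      Finset.Nat.sum_antidiagonal_eq_sum_range_succ_mk]
    rw [Fin.sum_univ_eq_sum_range
      (fun j => ((i : ℕ).choose j : K) * if j ≤ (k : ℕ) then (((k:ℕ).choose ((k:ℕ) - j)) : K) else 0)]
    rw [← Finset.sum_subset (Finset.range_mono (Nat.succ_le_of_lt k.isLt))]
    · apply Finset.sum_congr rfl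
      intro j hj
      rw [Finset.mem_range] at hj
      rw [if_pos (Nat.lt_succ_iff.mp hj)]
      push_cast
      ring
    · intro j _ hj
      rw [Finset.mem_range, Nat.lt_succ_iff, not_le] at hj
      rw [if_neg (by omega)]
      ring
  have hdetL : L.det = 1 := by
    rw [Matrix.det_of_lowerTriangular L (fun i j hij => by
      simp only [hL]
      rw [Nat.choose_eq_zero_of_lt (by exact_mod_cast hij), Nat.cast_zero])]
    simp [hL]
  have hdetU : U.det = 1 := by
    rw [Matrix.det_of_upperTriangular (fun i j hij => by
      simp only [hU]
      rw [if_neg (by exact not_le.2 (by exact_mod_cast hij))])]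
    simp [hU]
  have hdetM : M.det = 1 := by rw [hMLU, Matrix.det_mul, hdetL, hdetU, one_mul]
  have hunit : IsUnit (Mᵀ).det := by rw [Matrix.det_transpose, hdetM]; exact isUnit_one
  refine ⟨(Mᵀ)⁻¹.mulVec (fun i : Fin N => g (i : ℕ)), fun k hk => ?_⟩
  have key : (Mᵀ).mulVec ((Mᵀ)⁻¹.mulVec (fun i : Fin N => g (i : ℕ))) = fun i : Fin N => g (i : ℕ) := by
    rw [Matrix.mulVec_mulVec, Matrix.mul_nonsing_inv (Mᵀ) hunit, Matrix.one_mulVec]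
  have := congrFun key ⟨k, hk⟩
  simp only [Matrix.mulVec, dotProduct, Matrix.transpose_apply] at this
  rw [← this]
  apply Finset.sum_congr rfl
  intro i _
  simp only [Matrix.mulVec, dotProduct, hM]
  ring

/-- Over an integral domain `K` of prime characteristic `c`, a function `f : ℕ → K`
is a finite `K`-linear combination of the basic sum-functions `ρ_m(k) = C(m+k,m)` in `K`
iff `f` is periodic with period a power of `c`. -/
theorem stmt_15 (K : Type*) [CommRing K] [IsDomain K] (c : ℕ) (hc : c.Prime)
    [CharP K c] (f : ℕ → K) :
    (∃ n : ℕ, ∃ a : Fin n → K, ∀ k : ℕ,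
        f k = ∑ i, a i * ((((i : ℕ) + k).choose (i : ℕ) : ℕ) : K)) ↔
      ∃ r : ℕ, ∀ k : ℕ, f (k + c ^ r) = f k := by
  constructor
  · rintro ⟨n, a, h⟩
    refine ⟨n, fun k => ?_⟩
    rw [h, h]
    apply Finset.sum_congr rfl
    intro i _
    rw [rho_periodic K c hc n i k (lt_trans i.isLt (Nat.lt_pow_self hc.one_lt : n < c ^ n))]
  · rintro ⟨r, hr⟩
    obtain ⟨a, ha⟩ := interp K (c ^ r) f
    refine ⟨c ^ r, a, fun k => ?_⟩
    induction k using Nat.strong_induction_on with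
    | _ k ih =>
      by_cases hk : k < c ^ r
      · exact ha k hk
      · push_neg at hk
        have hpos : 0 < c ^ r := pow_pos hc.pos r
        have e : k - c ^ r + c ^ r = k := Nat.sub_add_cancel hk
        have h1 := hr (k - c ^ r)
        rw [e] at h1
        rw [h1, ih _ (by omega)]
        apply Finset.sum_congr rfl
        intro i _
        have h2 := rho_periodic K c hc r i (k - c ^ r) i.isLt
        rw [e] at h2
        rw [h2]
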